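/- (Integrability of the fundamental solution, second part.) For every fixed time T > 0, every index i with 1 ≤ i ≤ m_0, and every exponent p with 1 ≤ p < p_1 := (Q+2)/(Q+1), the partial derivative ∂K/∂x_i belongs to L^p(ℝ^N × (0,T)), i.e. ∫_0^T ∫_{ℝ^N} |∂_{x_i} K(x,t)|^p dx dt < ∞. -/

import Mathlib

open MeasureTheory Matrix Filter

noncomputable section

/-- Partial sums of the block sizes. -/
def blockSum (m : ℕ → ℕ) (j : ℕ) : ℕ := ∑ j' ∈ Finset.range j, m j'

/-- The index of the block containing the `i`-th coordinate. -/
def blockIdx (m : ℕ → ℕ) (i : ℕ) : ℕ := sInf {j : ℕ | i < blockSum m (j + 1)}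

/-- The anisotropic dilation matrix `δ_N(r) = diag(r I_{m₀}, r³ I_{m₁}, …)`. -/
def dil (N : ℕ) (m : ℕ → ℕ) (r : ℝ) : Matrix (Fin N) (Fin N) ℝ :=
  Matrix.diagonal fun i => r ^ (2 * blockIdx m (i : ℕ) + 1)

/-- `E(t) = exp(-tB)`. -/
def Emat (N : ℕ) (B : Matrix (Fin N) (Fin N) ℝ) (t : ℝ) : Matrix (Fin N) (Fin N) ℝ :=
  NormedSpace.exp ((-t) • B)

/-- The matrix `A₀` with upper-left `m₀ × m₀` identity block and zeros elsewhere. -/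
def A0 (N m0 : ℕ) : Matrix (Fin N) (Fin N) ℝ :=
  Matrix.diagonal fun i => if (i : ℕ) < m0 then (1 : ℝ) else 0

/-- `C(t) = ∫₀ᵗ E(s) A₀ E(s)ᵀ ds` (entrywise integral). -/
def Cmat (N : ℕ) (B : Matrix (Fin N) (Fin N) ℝ) (m0 : ℕ) (t : ℝ) : Matrix (Fin N) (Fin N) ℝ :=
  Matrix.of fun i j => ∫ s in (0:ℝ)..t, (Emat N B s * A0 N m0 * (Emat N B s)ᵀ) i j

/-- The normalizing constant `C_N = (4π)^{-N/2} |det C(1)|^{-1/2}`. -/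
def CN (N : ℕ) (B : Matrix (Fin N) (Fin N) ℝ) (m0 : ℕ) : ℝ :=
  (4 * Real.pi) ^ (-(N : ℝ) / 2) * |(Cmat N B m0 1).det| ^ (-(1 : ℝ) / 2)

/-- The Kolmogorov kernel
`K(x,t) = C_N t^{-Q/2} exp(-(1/4)⟨C(1)⁻¹ δ_N(1/√t)x, δ_N(1/√t)x⟩)` for `t > 0`,
and `K(x,t) = 0` for `t ≤ 0`. -/
def Kker (N : ℕ) (m : ℕ → ℕ) (B : Matrix (Fin N) (Fin N) ℝ) (Q : ℕ)
    (x : Fin N → ℝ) (t : ℝ) : ℝ :=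
  if 0 < t then
    CN N B (m 0) * t ^ (-(Q : ℝ) / 2) *
      Real.exp (-(1 / 4) * (((Cmat N B (m 0) 1)⁻¹ *ᵥ (dil N m (1 / Real.sqrt t) *ᵥ x)) ⬝ᵥ
        (dil N m (1 / Real.sqrt t) *ᵥ x)))
  else 0

/-- The `i`-th spatial partial derivative `∂_{x_i} K(x,t)` of the kernel. -/
def DKker (N : ℕ) (m : ℕ → ℕ) (B : Matrix (Fin N) (Fin N) ℝ) (Q : ℕ) (i : Fin N)
    (x : Fin N → ℝ) (t : ℝ) : ℝ :=
  deriv (fun r => Kker N m B Q (Function.update x i r) t) (x i)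

/-- Group convolution on `ℝ^N × (0,T)`:
`(f*g)(x,t) = ∫₀ᵗ ∫_{ℝ^N} f(x - E(t-s)y, t-s) g(y,s) dy ds`. -/
def conv (N : ℕ) (B : Matrix (Fin N) (Fin N) ℝ) (f g : (Fin N → ℝ) × ℝ → ℝ) :
    (Fin N → ℝ) × ℝ → ℝ :=
  fun z => ∫ s in (0:ℝ)..z.2, ∫ y : Fin N → ℝ,
    f (z.1 - Emat N B (z.2 - s) *ᵥ y, z.2 - s) * g (y, s)

/-- Group convolution over all of `ℝ^{N+1}`:
`(f*g)(x,t) = ∫_ℝ ∫_{ℝ^N} f(x - E(t-s)y, t-s) g(y,s) dy ds`. -/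
def convAll (N : ℕ) (B : Matrix (Fin N) (Fin N) ℝ) (f g : (Fin N → ℝ) × ℝ → ℝ) :
    (Fin N → ℝ) × ℝ → ℝ :=
  fun z => ∫ s : ℝ, ∫ y : Fin N → ℝ,
    f (z.1 - Emat N B (z.2 - s) *ᵥ y, z.2 - s) * g (y, s)

/-! ### Auxiliary lemmas -/

lemma blockSum_mono (m : ℕ → ℕ) : Monotone (blockSum m) := fun _ _ hab =>
  Finset.sum_le_sum_of_subset (Finset.range_subset_range.2 hab)

lemma blockIdx_eq (m : ℕ → ℕ) {j k : ℕ} (h1 : blockSum m j ≤ k) (h2 : k < blockSum m (j+1)) :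
    blockIdx m k = j := by
  have hmem : j ∈ {j : ℕ | k < blockSum m (j + 1)} := h2
  refine le_antisymm (Nat.sInf_le hmem) ?_
  by_contra h
  push_neg at h
  have hs : k < blockSum m (blockIdx m k + 1) := Nat.sInf_mem (Set.nonempty_of_mem hmem)
  have hle : blockSum m (blockIdx m k + 1) ≤ blockSum m j := blockSum_mono m (by omega)
  omega

lemma blockIdx_zero (m : ℕ → ℕ) {i : ℕ} (hi : i < m 0) : blockIdx m i = 0 := by
  have hmem : 0 ∈ {j : ℕ | i < blockSum m (j + 1)} := by
    simpa [blockSum] using hi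
  exact Nat.eq_zero_of_le_zero (Nat.sInf_le hmem)

lemma sum_blockIdx (m : ℕ → ℕ) (f : ℕ → ℕ) (J : ℕ) :
    ∑ k ∈ Finset.range (blockSum m J), f (blockIdx m k) = ∑ j ∈ Finset.range J, m j * f j := by
  induction J with
  | zero => simp [blockSum]
  | succ J ih =>
    have hsucc : blockSum m (J+1) = blockSum m J + m J := Finset.sum_range_succ m J
    rw [Finset.sum_range_succ, ← ih, hsucc]
    rw [Finset.range_eq_Ico, ← Finset.sum_Ico_consecutive _ (Nat.zero_le (blockSum m J))
      (Nat.le_add_right _ _), ← Finset.range_eq_Ico]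
    congr 1
    calc ∑ k ∈ Finset.Ico (blockSum m J) (blockSum m J + m J), f (blockIdx m k)
        = ∑ k ∈ Finset.Ico (blockSum m J) (blockSum m J + m J), f J :=
          Finset.sum_congr rfl (fun k hk => by
            rw [Finset.mem_Ico] at hk
            rw [blockIdx_eq m hk.1 (by rw [hsucc]; omega)])
      _ = m J * f J := by
          rw [Finset.sum_const, Nat.card_Ico]
          simp [mul_comm]

lemma posdef_lower {N : ℕ} [NeZero N] (A : Matrix (Fin N) (Fin N) ℝ) (hA : A.PosDef) :
    ∃ lam > (0:ℝ), ∀ w : Fin N → ℝ, lam * (∑ k, (w k)^2) ≤ (A *ᵥ w) ⬝ᵥ w := by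
  have key : ∀ w : Fin N → ℝ, (A *ᵥ w) ⬝ᵥ w = w ⬝ᵥ (A *ᵥ w) := fun w => dotProduct_comm _ _
  have hpos : ∀ w : Fin N → ℝ, w ≠ 0 → 0 < (A *ᵥ w) ⬝ᵥ w := by
    intro w hw
    have := hA.dotProduct_mulVec_pos hw
    simpa [star_trivial, key] using this
  set f : EuclideanSpace ℝ (Fin N) → ℝ := fun w => (A *ᵥ (w : Fin N → ℝ)) ⬝ᵥ (w : Fin N → ℝ) with hf
  have hfs : f = fun w : EuclideanSpace ℝ (Fin N) => ∑ k, (∑ j, A k j * w j) * w k := by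
    funext w; simp [hf, dotProduct, mulVec]
  have hcont : Continuous f := by
    rw [hfs]
    apply continuous_finset_sum
    intro k _
    exact ((continuous_finset_sum _ (fun j _ =>
      (continuous_const.mul (EuclideanSpace.proj j).continuous))).mul
      (EuclideanSpace.proj k).continuous)
  have hsph : IsCompact (Metric.sphere (0 : EuclideanSpace ℝ (Fin N)) 1) := isCompact_sphere _ _
  have hne : (Metric.sphere (0 : EuclideanSpace ℝ (Fin N)) 1).Nonempty := by
    rw [NormedSpace.sphere_nonempty]; norm_num
  obtain ⟨w0, hw0, hmin⟩ := hsph.exists_isMinOn hne hcont.continuousOn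
  have hw0ne : (w0 : Fin N → ℝ) ≠ 0 := by
    intro h
    have : ‖w0‖ = 1 := by simpa using mem_sphere_zero_iff_norm.1 hw0
    rw [show w0 = 0 from WithLp.ofLp_injective (p := 2) (h.trans (WithLp.ofLp_zero (p := 2)).symm)] at this
    simp at this
  refine ⟨f w0, hpos _ hw0ne, ?_⟩
  intro w
  rcases eq_or_ne w 0 with h | h
  · simp [h, key]
  · set W : EuclideanSpace ℝ (Fin N) := (WithLp.equiv 2 _).symm w with hW
    have hWne : W ≠ 0 := fun h0 => h (by simpa [hW] using congrArg WithLp.ofLp h0)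
    have hnorm : ‖W‖ ^ 2 = ∑ k, (w k)^2 := by
      rw [EuclideanSpace.norm_eq]
      rw [Real.sq_sqrt (by positivity)]
      simp [hW]
    set u : EuclideanSpace ℝ (Fin N) := ‖W‖⁻¹ • W with hu
    have hWn : ‖W‖ ≠ 0 := norm_ne_zero_iff.2 hWne
    have hus : u ∈ Metric.sphere (0 : EuclideanSpace ℝ (Fin N)) 1 := by
      simp [hu, norm_smul, abs_of_nonneg (inv_nonneg.2 (norm_nonneg W)), inv_mul_cancel₀ hWn]
    have hfu : f w0 ≤ f u := hmin hus
    have hscale : f u = (‖W‖⁻¹)^2 * f W := by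
      simp only [hf, hu]
      have : ((‖W‖⁻¹ • W : EuclideanSpace ℝ (Fin N)) : Fin N → ℝ) = ‖W‖⁻¹ • (W : Fin N → ℝ) := rfl
      rw [this, mulVec_smul, smul_dotProduct, dotProduct_smul]
      ring_nf
    have hfW : f W = (A *ᵥ w) ⬝ᵥ w := rfl
    have h2 : f w0 * ‖W‖^2 ≤ f W := by
      have := mul_le_mul_of_nonneg_right hfu (by positivity : (0:ℝ) ≤ ‖W‖^2)
      rw [hscale] at this
      calc f w0 * ‖W‖^2 ≤ (‖W‖⁻¹)^2 * f W * ‖W‖^2 := this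
        _ = f W := by field_simp
    calc f w0 * (∑ k, (w k)^2) = f w0 * ‖W‖^2 := by rw [hnorm]
      _ ≤ f W := h2
      _ = (A *ᵥ w) ⬝ᵥ w := hfW

lemma abs_le_exp_sq (a u : ℝ) (ha : 0 < a) : |u| ≤ (1 + a⁻¹) * Real.exp (a * u^2) := by
  have h1 : |u| ≤ 1 + u^2 := by nlinarith [abs_nonneg u, sq_abs u, sq_nonneg (|u| - 1)]
  have h2 : (1:ℝ) ≤ Real.exp (a * u^2) := by
    rw [Real.one_le_exp_iff]; positivity
  have h3 : u^2 ≤ a⁻¹ * Real.exp (a * u^2) := by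
    have := Real.add_one_le_exp (a * u^2)
    have h4 : a * u^2 ≤ Real.exp (a * u^2) := by nlinarith [Real.exp_pos (a * u^2)]
    calc u^2 = a⁻¹ * (a * u^2) := by field_simp
      _ ≤ a⁻¹ * Real.exp (a * u^2) := by
          apply mul_le_mul_of_nonneg_left h4 (by positivity)
  calc |u| ≤ 1 + u^2 := h1
    _ ≤ Real.exp (a * u^2) + a⁻¹ * Real.exp (a * u^2) := by linarith
    _ = (1 + a⁻¹) * Real.exp (a * u^2) := by ring

lemma deriv_Kker (N : ℕ) (m : ℕ → ℕ) (B : Matrix (Fin N) (Fin N) ℝ) (Q : ℕ) (i : Fin N)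
    (x : Fin N → ℝ) {t : ℝ} (ht : 0 < t) :
    DKker N m B Q i x t =
      Kker N m B Q x t * (-(1/4) *
        ((((Cmat N B (m 0) 1)⁻¹ *ᵥ (dil N m (1 / Real.sqrt t) *ᵥ x)) ⬝ᵥ
            (dil N m (1 / Real.sqrt t) *ᵥ Pi.single i 1)) +
         (((Cmat N B (m 0) 1)⁻¹ *ᵥ (dil N m (1 / Real.sqrt t) *ᵥ Pi.single i 1)) ⬝ᵥ
            (dil N m (1 / Real.sqrt t) *ᵥ x)))) := by
  set A := (Cmat N B (m 0) 1)⁻¹ with hA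
  set D := dil N m (1 / Real.sqrt t) with hD
  set w := D *ᵥ x with hw
  set v := D *ᵥ (Pi.single i 1 : Fin N → ℝ) with hv
  set q0 := (A *ᵥ w) ⬝ᵥ w with hq0
  set b := (A *ᵥ w) ⬝ᵥ v + (A *ᵥ v) ⬝ᵥ w with hb
  set c2 := (A *ᵥ v) ⬝ᵥ v with hc2
  have hupdate : ∀ r : ℝ, Function.update x i r = x + (r - x i) • (Pi.single i 1 : Fin N → ℝ) := by
    intro r; funext j
    rcases eq_or_ne j i with h | h
    · subst h; simp
    · simp [Function.update_of_ne h, Pi.single_eq_of_ne h]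
  have hq : ∀ r : ℝ, (A *ᵥ (D *ᵥ Function.update x i r)) ⬝ᵥ (D *ᵥ Function.update x i r)
      = q0 + (r - x i) * b + (r - x i)^2 * c2 := by
    intro r
    rw [hupdate]
    rw [mulVec_add, mulVec_smul, mulVec_add, mulVec_smul]
    rw [add_dotProduct, dotProduct_add, dotProduct_add, smul_dotProduct, smul_dotProduct,
      dotProduct_smul, dotProduct_smul]
    simp only [smul_eq_mul, hq0, hb, hc2]
    ring
  have hfun : (fun r => Kker N m B Q (Function.update x i r) t)
      = fun r => CN N B (m 0) * t ^ (-(Q:ℝ)/2) *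
          Real.exp (-(1/4) * (q0 + (r - x i) * b + (r - x i)^2 * c2)) := by
    funext r
    rw [Kker, if_pos ht, ← hA, ← hD, hq r]
  have h1 : HasDerivAt (fun r : ℝ => r - x i) 1 (x i) := (hasDerivAt_id _).sub_const _
  have h2 : HasDerivAt (fun r : ℝ => (r - x i) * b) b (x i) := by simpa using h1.mul_const b
  have h3 : HasDerivAt (fun r : ℝ => (r - x i)^2 * c2) 0 (x i) := by
    have := (h1.pow 2).mul_const c2
    simpa using this
  have hpoly : HasDerivAt (fun r : ℝ => q0 + (r - x i) * b + (r - x i)^2 * c2) b (x i) := by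
    have := ((hasDerivAt_const (x i) q0).add h2).add h3
    simp only [zero_add, add_zero] at this
    exact this
  have hin : HasDerivAt (fun r : ℝ => -(1/4) * (q0 + (r - x i) * b + (r - x i)^2 * c2))
      (-(1/4) * b) (x i) := hpoly.const_mul _
  have hexp := hin.exp
  have hfull := hexp.const_mul (CN N B (m 0) * t ^ (-(Q:ℝ)/2))
  rw [DKker, hfun, hfull.deriv]
  rw [Kker, if_pos ht, ← hA, ← hD, ← hw, ← hq0]
  simp only [sub_self]
  ring_nf

lemma DKker_bound (N : ℕ) (m : ℕ → ℕ) (B : Matrix (Fin N) (Fin N) ℝ) (Q : ℕ) (i : Fin N)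
    (hi : (i : ℕ) < m 0) (lam : ℝ) (hlam : 0 < lam)
    (hquad : ∀ w : Fin N → ℝ, lam * (∑ k, (w k)^2) ≤ ((Cmat N B (m 0) 1)⁻¹ *ᵥ w) ⬝ᵥ w)
    (x : Fin N → ℝ) {t : ℝ} (ht : 0 < t) :
    |DKker N m B Q i x t| ≤
      (|CN N B (m 0)| * (1/4) *
        (∑ k, (|(Cmat N B (m 0) 1)⁻¹ i k| + |(Cmat N B (m 0) 1)⁻¹ k i|)) * (1 + (lam/8)⁻¹))
      * t ^ (-((Q:ℝ)+1)/2) *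
      Real.exp (-(lam/8) * ∑ k : Fin N, ((1/Real.sqrt t)^(2*blockIdx m (k:ℕ)+1) * x k)^2) := by
  set A := (Cmat N B (m 0) 1)⁻¹ with hA
  set τ := 1 / Real.sqrt t with hτ
  have hτpos : 0 < τ := by
    rw [hτ]; positivity
  set w := dil N m τ *ᵥ x with hw
  have hwk : ∀ k, w k = τ^(2*blockIdx m (k:ℕ)+1) * x k := by
    intro k; rw [hw, dil, mulVec_diagonal]
  set σ := ∑ k, (w k)^2 with hσ
  have hσ' : σ = ∑ k : Fin N, (τ^(2*blockIdx m (k:ℕ)+1) * x k)^2 := by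
    rw [hσ]; exact Finset.sum_congr rfl fun k _ => by rw [hwk k]
  set q0 := (A *ᵥ w) ⬝ᵥ w with hq0
  have hv : dil N m τ *ᵥ (Pi.single i 1 : Fin N → ℝ) = Pi.single i τ := by
    funext k
    rw [dil, mulVec_diagonal]
    rcases eq_or_ne k i with h | h
    · subst h; rw [blockIdx_zero m hi]; simp
    · simp [Pi.single_eq_of_ne h]
  set S := ∑ k, (A i k + A k i) * w k with hS
  have hb_eq : (A *ᵥ w) ⬝ᵥ (dil N m τ *ᵥ (Pi.single i 1 : Fin N → ℝ))
      + (A *ᵥ (dil N m τ *ᵥ (Pi.single i 1 : Fin N → ℝ))) ⬝ᵥ w = τ * S := by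
    rw [hv]
    have h1 : (A *ᵥ w) ⬝ᵥ (Pi.single i τ : Fin N → ℝ) = (A *ᵥ w) i * τ := by
      simp [dotProduct, Pi.single_apply, mul_ite]
    have h2 : (A *ᵥ (Pi.single i τ : Fin N → ℝ)) ⬝ᵥ w = ∑ k, A k i * τ * w k := by
      simp only [dotProduct]
      congr 1; funext k
      congr 1
      simp [mulVec, dotProduct, Pi.single_apply, mul_ite]
    rw [h1, h2, hS]
    simp only [mulVec, dotProduct, Finset.sum_mul, Finset.mul_sum]
    rw [← Finset.sum_add_distrib]
    congr 1; funext k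
    ring
  set Sa := ∑ k, (|A i k| + |A k i|) with hSa
  have hSbound : |S| ≤ Sa * ((1 + (lam/8)⁻¹) * Real.exp ((lam/8) * σ)) := by
    calc |S| ≤ ∑ k, |(A i k + A k i) * w k| := Finset.abs_sum_le_sum_abs _ _
      _ ≤ ∑ k, (|A i k| + |A k i|) * ((1 + (lam/8)⁻¹) * Real.exp ((lam/8) * σ)) := by
          apply Finset.sum_le_sum
          intro k _
          rw [abs_mul]
          apply mul_le_mul (abs_add_le _ _) ?_ (abs_nonneg _) (by positivity)
          calc |w k| ≤ (1 + (lam/8)⁻¹) * Real.exp ((lam/8) * (w k)^2) :=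
                abs_le_exp_sq _ _ (by positivity)
            _ ≤ (1 + (lam/8)⁻¹) * Real.exp ((lam/8) * σ) := by
                apply mul_le_mul_of_nonneg_left ?_ (by positivity)
                apply Real.exp_le_exp.2
                apply mul_le_mul_of_nonneg_left ?_ (by positivity)
                exact Finset.single_le_sum (f := fun k => (w k)^2)
                  (fun k _ => sq_nonneg _) (Finset.mem_univ k)
      _ = Sa * ((1 + (lam/8)⁻¹) * Real.exp ((lam/8) * σ)) := by
          rw [hSa, Finset.sum_mul]
  have hqbound : Real.exp (-(1/4) * q0) ≤ Real.exp (-(lam/4) * σ) := by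
    apply Real.exp_le_exp.2
    have h := hquad w
    rw [← hσ, ← hq0] at h
    linarith
  have hKabs : |Kker N m B Q x t| = |CN N B (m 0)| * t ^ (-(Q:ℝ)/2) * Real.exp (-(1/4) * q0) := by
    rw [Kker, if_pos ht, ← hA, ← hτ, ← hw, ← hq0]
    rw [abs_mul, abs_mul, abs_of_nonneg (Real.rpow_nonneg ht.le _), Real.abs_exp]
  have hpow : t ^ (-(Q:ℝ)/2) * τ = t ^ (-((Q:ℝ)+1)/2) := by
    have h1 : τ = t ^ (-(1:ℝ)/2) := by
      rw [hτ, Real.sqrt_eq_rpow, one_div, ← Real.rpow_neg ht.le]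
      norm_num
    rw [h1, ← Real.rpow_add ht]
    ring_nf
  rw [deriv_Kker N m B Q i x ht, ← hA, ← hτ, ← hw, hb_eq]
  rw [abs_mul, hKabs, abs_mul, abs_mul]
  rw [abs_of_nonneg hτpos.le]
  have habs14 : |(-(1/4) : ℝ)| = 1/4 := by norm_num
  rw [habs14]
  calc |CN N B (m 0)| * t ^ (-(Q:ℝ)/2) * Real.exp (-(1/4) * q0) * (1/4 * (τ * |S|))
      = (|CN N B (m 0)| * (1/4) * τ * t ^ (-(Q:ℝ)/2)) * (|S| * Real.exp (-(1/4) * q0)) := by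
        ring
    _ ≤ (|CN N B (m 0)| * (1/4) * τ * t ^ (-(Q:ℝ)/2)) *
          ((Sa * ((1 + (lam/8)⁻¹) * Real.exp ((lam/8) * σ))) * Real.exp (-(lam/4) * σ)) := by
        apply mul_le_mul_of_nonneg_left ?_ (by positivity)
        exact mul_le_mul hSbound hqbound (Real.exp_pos _).le (by positivity)
    _ = (|CN N B (m 0)| * (1/4) * Sa * (1 + (lam/8)⁻¹)) * (t ^ (-(Q:ℝ)/2) * τ) *
          (Real.exp ((lam/8) * σ) * Real.exp (-(lam/4) * σ)) := by ring
    _ = (|CN N B (m 0)| * (1/4) * Sa * (1 + (lam/8)⁻¹)) * t ^ (-((Q:ℝ)+1)/2) *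
          Real.exp (-(lam/8) * σ) := by
        rw [hpow, ← Real.exp_add]
        ring_nf
    _ = (|CN N B (m 0)| * (1/4) * Sa * (1 + (lam/8)⁻¹)) * t ^ (-((Q:ℝ)+1)/2) *
          Real.exp (-(lam/8) * ∑ k : Fin N, (τ^(2*blockIdx m (k:ℕ)+1) * x k)^2) := by
        rw [← hσ']
set_option maxHeartbeats 1000000

/-- **Integrability of the fundamental solution, second part.**
For every `T > 0`, every `i` with `i < m₀`, and every
`1 ≤ p < p₁ = (Q+2)/(Q+1)`, the partial derivative `∂_{x_i} K` belongs to
`L^p(ℝ^N × (0,T))`. -/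
theorem kernel_deriv_memLp (N κ : ℕ) (m : ℕ → ℕ) (B : Matrix (Fin N) (Fin N) ℝ) (Q : ℕ)
    (hN : 2 ≤ N)
    (hmono : ∀ j, j < κ → m (j + 1) ≤ m j) (hm1 : ∀ j, j ≤ κ → 1 ≤ m j)
    (hsum : ∑ j ∈ Finset.range (κ + 1), m j = N)
    (hQ : Q = ∑ j ∈ Finset.range (κ + 1), (2 * j + 1) * m j)
    (hB : B.trace = 0) (hC1 : (Cmat N B (m 0) 1).PosDef)
    (T : ℝ) (hT : 0 < T) (i : Fin N) (hi : (i : ℕ) < m 0)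
    (p : ℝ) (hp1 : 1 ≤ p) (hp2 : p < ((Q : ℝ) + 2) / ((Q : ℝ) + 1)) :
    IntegrableOn (fun z : (Fin N → ℝ) × ℝ => |DKker N m B Q i z.1 z.2| ^ p)
      (Set.univ ×ˢ Set.Ioo 0 T) volume := by
  classical
  have hNZ : NeZero N := ⟨by omega⟩
  -- positive definiteness of the inverse matrix and the spectral lower bound
  have hApos : ((Cmat N B (m 0) 1)⁻¹).PosDef := hC1.inv
  obtain ⟨lam, hlam, hquad⟩ := posdef_lower _ hApos
  -- the constant from the pointwise bound
  set c7 : ℝ := |CN N B (m 0)| * (1/4) *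
      (∑ k, (|(Cmat N B (m 0) 1)⁻¹ i k| + |(Cmat N B (m 0) 1)⁻¹ k i|)) * (1 + (lam/8)⁻¹)
    with hc7
  have hSa0 : (0:ℝ) ≤ ∑ k, (|(Cmat N B (m 0) 1)⁻¹ i k| + |(Cmat N B (m 0) 1)⁻¹ k i|) :=
    Finset.sum_nonneg fun k _ => by positivity
  have hinv8 : (0:ℝ) < (lam/8)⁻¹ := inv_pos.2 (by linarith)
  have hc7nn : 0 ≤ c7 := by
    rw [hc7]
    have : (0:ℝ) ≤ 1 + (lam/8)⁻¹ := by linarith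
    positivity
  -- homogeneity sum
  have hQsum : ∑ k : Fin N, (2 * blockIdx m (k:ℕ) + 1) = Q := by
    rw [Fin.sum_univ_eq_sum_range (fun k => 2 * blockIdx m k + 1) N]
    have hbs : blockSum m (κ+1) = N := hsum
    rw [← hbs, sum_blockIdx m (fun j => 2*j+1) (κ+1), hQ]
    exact Finset.sum_congr rfl fun j _ => by ring
  -- exponent arithmetic
  set e : ℝ := (-((Q:ℝ)+1)/2) * p with he
  have hQ1pos : (0:ℝ) < (Q:ℝ) + 1 := by positivity
  have hpQ : p * ((Q:ℝ)+1) < (Q:ℝ)+2 := (lt_div_iff₀ hQ1pos).1 hp2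
  have hexpo : -1 < e + (Q:ℝ)/2 := by rw [he]; nlinarith
  -- the dominating function
  set G : (Fin N → ℝ) × ℝ → ℝ := fun z =>
      (c7 ^ p * z.2 ^ e) * Real.exp (-(lam/8) *
        ∑ k : Fin N, ((1/Real.sqrt z.2)^(2*blockIdx m (k:ℕ)+1) * z.1 k)^2)
    with hG
  have hGmeas : Measurable G := by
    apply Measurable.mul
    · exact (measurable_snd.pow_const e).const_mul _
    · apply Real.measurable_exp.comp
      apply Measurable.const_mul
      apply Finset.measurable_sum
      intro k _
      apply Measurable.pow_const
      apply Measurable.mul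
      · exact ((measurable_const.div (Real.continuous_sqrt.measurable.comp
          measurable_snd)).pow_const _)
      · exact (measurable_pi_apply k).comp measurable_fst
  -- the product-measure identity
  have hprodmeas : (volume : Measure ((Fin N → ℝ) × ℝ)).restrict (Set.univ ×ˢ Set.Ioo (0:ℝ) T)
      = (volume : Measure (Fin N → ℝ)).prod (volume.restrict (Set.Ioo (0:ℝ) T)) := by
    rw [Measure.volume_eq_prod, ← Measure.prod_restrict, Measure.restrict_univ]
  -- pointwise product form of `G` for positive times
  have hGfun : ∀ t : ℝ, 0 < t → (fun x : Fin N → ℝ => G (x, t)) = fun x =>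
      (c7 ^ p * t ^ e) * ∏ k : Fin N,
        Real.exp (-(lam/8 * ((1/Real.sqrt t)^(2*blockIdx m (k:ℕ)+1))^2) * (x k)^2) := by
    intro t ht
    funext x
    simp only [hG]
    rw [← Real.exp_sum]
    congr 1
    rw [Finset.mul_sum]
    exact congrArg Real.exp (Finset.sum_congr rfl fun k _ => by ring)
  have hdpos : ∀ t : ℝ, 0 < t → ∀ k : Fin N,
      0 < lam/8 * ((1/Real.sqrt t)^(2*blockIdx m (k:ℕ)+1))^2 := by
    intro t ht k
    have : (0:ℝ) < 1/Real.sqrt t := by positivity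
    positivity
  -- integrability of G on the product
  have hGint : Integrable G
      ((volume : Measure (Fin N → ℝ)).prod (volume.restrict (Set.Ioo (0:ℝ) T))) := by
    rw [integrable_prod_iff' hGmeas.aestronglyMeasurable]
    constructor
    · filter_upwards [ae_restrict_mem measurableSet_Ioo] with t ht
      rw [hGfun t ht.1]
      exact (MeasureTheory.Integrable.fintype_prod (𝕜 := ℝ)
        (f := fun (k : Fin N) (u : ℝ) => Real.exp (-(lam/8 * ((1/Real.sqrt t)^(2*blockIdx m (k:ℕ)+1))^2) * u^2))
        (fun k => integrable_exp_neg_mul_sq (hdpos t ht.1 k))).const_mul _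
    · -- the t-marginal
      have hmarg : ∀ t ∈ Set.Ioo (0:ℝ) T, (∫ x : Fin N → ℝ, ‖G (x, t)‖) =
          (c7 ^ p * (Real.sqrt (Real.pi / (lam/8)))^N) * t ^ (e + (Q:ℝ)/2) := by
        intro t ht
        have ht0 := ht.1
        have hnorm : (fun x : Fin N → ℝ => ‖G (x, t)‖) = fun x => G (x, t) := by
          funext x
          rw [Real.norm_eq_abs, abs_of_nonneg]
          rw [hG]
          have h1 : (0:ℝ) ≤ c7 ^ p := Real.rpow_nonneg hc7nn p
          have h2 : (0:ℝ) ≤ t ^ e := Real.rpow_nonneg ht0.le e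
          positivity
        rw [hnorm]
        rw [show (fun x : Fin N → ℝ => G (x, t)) = _ from hGfun t ht0]
        rw [MeasureTheory.integral_const_mul]
        rw [MeasureTheory.volume_pi]
        rw [MeasureTheory.integral_fintype_prod_eq_prod (𝕜 := ℝ)
          (f := fun (k : Fin N) (u : ℝ) => Real.exp (-(lam/8 * ((1/Real.sqrt t)^(2*blockIdx m (k:ℕ)+1))^2) * u^2))]
        have hprod : ∏ k : Fin N, ∫ u : ℝ,
            Real.exp (-(lam/8 * ((1/Real.sqrt t)^(2*blockIdx m (k:ℕ)+1))^2) * u^2)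
            = (Real.sqrt (Real.pi / (lam/8)))^N * t ^ ((Q:ℝ)/2) := by
          have hterm : ∀ k : Fin N, (∫ u : ℝ,
              Real.exp (-(lam/8 * ((1/Real.sqrt t)^(2*blockIdx m (k:ℕ)+1))^2) * u^2))
              = Real.sqrt (Real.pi / (lam/8)) * (Real.sqrt t)^(2*blockIdx m (k:ℕ)+1) := by
            intro k
            rw [integral_gaussian]
            have hst : 0 < Real.sqrt t := Real.sqrt_pos.2 ht0
            have hd : (1/Real.sqrt t)^(2*blockIdx m (k:ℕ)+1)
                = ((Real.sqrt t)^(2*blockIdx m (k:ℕ)+1))⁻¹ := by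
              rw [one_div, inv_pow]
            rw [hd]
            have hsn : ((Real.sqrt t)^(2*blockIdx m (k:ℕ)+1)) ≠ 0 := pow_ne_zero _ hst.ne'
            have hlam8 : lam/8 ≠ 0 := by positivity
            have hpi : Real.pi / (lam/8 * (((Real.sqrt t)^(2*blockIdx m (k:ℕ)+1))⁻¹)^2)
                = (Real.pi / (lam/8)) * ((Real.sqrt t)^(2*blockIdx m (k:ℕ)+1))^2 := by
              field_simp
            rw [hpi]
            rw [Real.sqrt_mul (by positivity)]
            rw [Real.sqrt_sq (by positivity)]
          have hpc : ∏ k : Fin N, (∫ u : ℝ,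
              Real.exp (-(lam/8 * ((1/Real.sqrt t)^(2*blockIdx m (k:ℕ)+1))^2) * u^2))
              = ∏ k : Fin N, (Real.sqrt (Real.pi / (lam/8)) * (Real.sqrt t)^(2*blockIdx m (k:ℕ)+1)) :=
            Finset.prod_congr rfl fun k _ => hterm k
          rw [hpc]
          rw [Finset.prod_mul_distrib, Finset.prod_const, Finset.card_univ, Fintype.card_fin]
          congr 1
          rw [Finset.prod_pow_eq_pow_sum, hQsum]
          rw [Real.sqrt_eq_rpow, ← Real.rpow_natCast (t ^ ((1:ℝ)/2)) Q, ← Real.rpow_mul ht0.le]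
          congr 1
          ring
        rw [hprod]
        rw [Real.rpow_add ht0]
        ring
      have hexpl : IntegrableOn
          (fun t : ℝ => (c7 ^ p * (Real.sqrt (Real.pi / (lam/8)))^N) * t ^ (e + (Q:ℝ)/2))
          (Set.Ioo (0:ℝ) T) volume := by
        apply Integrable.const_mul
        have h := intervalIntegral.intervalIntegrable_rpow' (a := 0) (b := T) hexpo
        rw [intervalIntegrable_iff] at h
        rw [Set.uIoc_of_le hT.le] at h
        exact h.mono_set Set.Ioo_subset_Ioc_self
      exact MeasureTheory.Integrable.congr hexpl
        ((ae_restrict_mem measurableSet_Ioo).mono fun t ht => (hmarg t ht).symm)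
  -- the explicit integrand
  set F : (Fin N → ℝ) × ℝ → ℝ := fun z =>
      |Kker N m B Q z.1 z.2 * (-(1/4) *
        ((((Cmat N B (m 0) 1)⁻¹ *ᵥ (dil N m (1 / Real.sqrt z.2) *ᵥ z.1)) ⬝ᵥ
            (dil N m (1 / Real.sqrt z.2) *ᵥ Pi.single i 1)) +
         (((Cmat N B (m 0) 1)⁻¹ *ᵥ (dil N m (1 / Real.sqrt z.2) *ᵥ Pi.single i 1)) ⬝ᵥ
            (dil N m (1 / Real.sqrt z.2) *ᵥ z.1))))| ^ p
    with hF
  have hsqrtmeas : Measurable fun z : (Fin N → ℝ) × ℝ => 1 / Real.sqrt z.2 :=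
    measurable_const.div (Real.continuous_sqrt.measurable.comp measurable_snd)
  have hdot : ∀ (a b : (Fin N → ℝ) × ℝ → Fin N → ℝ),
      (∀ k : Fin N, Measurable fun z => a z k) → (∀ k : Fin N, Measurable fun z => b z k) →
      Measurable (fun z : (Fin N → ℝ) × ℝ =>
        ((Cmat N B (m 0) 1)⁻¹ *ᵥ (dil N m (1 / Real.sqrt z.2) *ᵥ a z)) ⬝ᵥ
          (dil N m (1 / Real.sqrt z.2) *ᵥ b z)) := by
    intro a b ha hb
    have hrew : (fun z : (Fin N → ℝ) × ℝ =>
        ((Cmat N B (m 0) 1)⁻¹ *ᵥ (dil N m (1 / Real.sqrt z.2) *ᵥ a z)) ⬝ᵥ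
          (dil N m (1 / Real.sqrt z.2) *ᵥ b z))
        = fun z => ∑ k : Fin N,
            (∑ j : Fin N, (Cmat N B (m 0) 1)⁻¹ k j *
              ((1/Real.sqrt z.2)^(2*blockIdx m (j:ℕ)+1) * a z j)) *
            ((1/Real.sqrt z.2)^(2*blockIdx m (k:ℕ)+1) * b z k) := by
      funext z
      rw [show dil N m (1/Real.sqrt z.2) *ᵥ a z
          = (fun k : Fin N => (1/Real.sqrt z.2)^(2*blockIdx m (k:ℕ)+1) * a z k) from
        funext fun k => by rw [dil, mulVec_diagonal]]
      rw [show dil N m (1/Real.sqrt z.2) *ᵥ b z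
          = (fun k : Fin N => (1/Real.sqrt z.2)^(2*blockIdx m (k:ℕ)+1) * b z k) from
        funext fun k => by rw [dil, mulVec_diagonal]]
      simp [dotProduct, mulVec]
    rw [hrew]
    apply Finset.measurable_sum
    intro k _
    exact (Finset.measurable_sum _ fun j _ =>
      measurable_const.mul ((hsqrtmeas.pow_const _).mul (ha j))).mul
      ((hsqrtmeas.pow_const _).mul (hb k))
  have hz1meas : ∀ k : Fin N, Measurable fun z : (Fin N → ℝ) × ℝ => z.1 k :=
    fun k => (measurable_pi_apply k).comp measurable_fst
  have hsingmeas : ∀ k : Fin N,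
      Measurable fun _ : (Fin N → ℝ) × ℝ => (Pi.single i 1 : Fin N → ℝ) k :=
    fun k => measurable_const
  have hKmeas : Measurable (fun z : (Fin N → ℝ) × ℝ => Kker N m B Q z.1 z.2) := by
    have : (fun z : (Fin N → ℝ) × ℝ => Kker N m B Q z.1 z.2)
        = fun z => if 0 < z.2 then
            CN N B (m 0) * z.2 ^ (-(Q : ℝ) / 2) *
              Real.exp (-(1 / 4) * (((Cmat N B (m 0) 1)⁻¹ *ᵥ (dil N m (1 / Real.sqrt z.2) *ᵥ z.1)) ⬝ᵥ
                (dil N m (1 / Real.sqrt z.2) *ᵥ z.1)))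
          else 0 := funext fun z => rfl
    rw [this]
    apply Measurable.ite (measurableSet_lt measurable_const measurable_snd)
    · exact (measurable_const.mul (measurable_snd.pow_const _)).mul
        (Real.measurable_exp.comp ((hdot _ _ hz1meas hz1meas).const_mul _))
    · exact measurable_const
  have hFmeas : Measurable F := by
    rw [hF]
    apply Measurable.pow_const
    apply Measurable.abs
    exact hKmeas.mul (((hdot _ _ hz1meas hsingmeas).add (hdot _ _ hsingmeas hz1meas)).const_mul _)
  have hsetmeas : MeasurableSet (Set.univ ×ˢ Set.Ioo (0:ℝ) T) :=
    (MeasurableSet.univ (α := Fin N → ℝ)).prod measurableSet_Ioo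
  -- F is dominated by G on the set
  have hFG : ∀ z ∈ Set.univ ×ˢ Set.Ioo (0:ℝ) T, ‖F z‖ ≤ G z := by
    rintro ⟨x, t⟩ hz
    obtain ⟨-, ht⟩ := hz
    have ht0 : (0:ℝ) < t := ht.1
    have hDK : F (x, t) = |DKker N m B Q i x t| ^ p := by
      rw [hF, deriv_Kker N m B Q i x ht0]
    have hb := DKker_bound N m B Q i hi lam hlam hquad x ht0
    rw [← hc7] at hb
    have habs : ‖F (x, t)‖ = |DKker N m B Q i x t| ^ p := by
      rw [hDK, Real.norm_eq_abs, abs_of_nonneg (Real.rpow_nonneg (abs_nonneg _) p)]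
    rw [habs]
    set σ : ℝ := ∑ k : Fin N, ((1/Real.sqrt t)^(2*blockIdx m (k:ℕ)+1) * x k)^2 with hσ
    have hσnn : 0 ≤ σ := Finset.sum_nonneg fun k _ => sq_nonneg _
    have hrhsnn : 0 ≤ c7 * t ^ (-((Q:ℝ)+1)/2) * Real.exp (-(lam/8) * σ) := by
      have := Real.rpow_nonneg ht0.le (-((Q:ℝ)+1)/2)
      positivity
    calc |DKker N m B Q i x t| ^ p
        ≤ (c7 * t ^ (-((Q:ℝ)+1)/2) * Real.exp (-(lam/8) * σ)) ^ p :=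
          Real.rpow_le_rpow (abs_nonneg _) hb (by linarith)
      _ = c7 ^ p * (t ^ (-((Q:ℝ)+1)/2)) ^ p * (Real.exp (-(lam/8) * σ)) ^ p := by
          rw [Real.mul_rpow (by positivity) (Real.exp_pos _).le,
            Real.mul_rpow hc7nn (Real.rpow_nonneg ht0.le _)]
      _ = c7 ^ p * t ^ e * Real.exp ((-(lam/8) * σ) * p) := by
          rw [← Real.rpow_mul ht0.le, ← Real.exp_mul, he]
      _ ≤ c7 ^ p * t ^ e * Real.exp (-(lam/8) * σ) := by
          apply mul_le_mul_of_nonneg_left ?_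
            (mul_nonneg (Real.rpow_nonneg hc7nn p) (Real.rpow_nonneg ht0.le e))
          apply Real.exp_le_exp.2
          have hu : -(lam/8) * σ ≤ 0 := by
            apply mul_nonpos_of_nonpos_of_nonneg ?_ hσnn
            linarith
          nlinarith
      _ = G (x, t) := by rw [hG]
  -- conclude
  have hGint' : Integrable G
      ((volume : Measure ((Fin N → ℝ) × ℝ)).restrict (Set.univ ×ˢ Set.Ioo (0:ℝ) T)) := by
    rw [hprodmeas]; exact hGint
  have hFint : IntegrableOn F (Set.univ ×ˢ Set.Ioo (0:ℝ) T) volume := by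
    apply Integrable.mono' hGint' hFmeas.aestronglyMeasurable
    rw [ae_restrict_iff' hsetmeas]
    exact MeasureTheory.ae_of_all _ hFG
  apply hFint.congr_fun ?_ hsetmeas
  rintro ⟨x, t⟩ hz
  obtain ⟨-, ht⟩ := hz
  rw [hF]
  simp only
  rw [deriv_Kker N m B Q i x ht.1]

end
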